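/- Let λ > 0 and c ∈ (0, 1/κ) for some κ > 0, let f_λ ∈ L²(ℝ_+) be nonnegative with ∫_0^∞ f_λ² du > 0, let ς² be a bounded nonnegative function, and suppose φ_∞ : ℝ_+ → [0,1] is continuous and satisfies φ_∞(t) = Ξ(t)² + (ρ/(λ²c)) ∫_0^t f_λ(t-s)² ς(s)² φ_∞(s) ds with ρ = cκ < 1, where Ξ = φ - f_λ*φ ∈ L²(ℝ_+) and f_λ² * ς² = cλ²(1 - Ξ²). If additionally κ‖ς²‖_∞ ∫_0^∞ f_λ(u)² du < λ², then φ_∞ is integrable and ∫_0^∞ φ_∞(s) ds ≤ λ²/(λ² - κ‖ς²‖_∞ ∫_0^∞ f_λ(u)² du) · ∫_0^∞ Ξ(t)² dt. -/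

import Mathlib

open MeasureTheory Set
open scoped ENNReal

lemma myOfReal_integral_le {α} [MeasurableSpace α] (μ : Measure α) (f : α → ℝ) :
    ENNReal.ofReal (∫ x, f x ∂μ) ≤ ∫⁻ x, ENNReal.ofReal (f x) ∂μ := by
  by_cases hf : Integrable f μ
  · calc ENNReal.ofReal (∫ x, f x ∂μ)
        ≤ ENNReal.ofReal (∫ x, max (f x) 0 ∂μ) :=
          ENNReal.ofReal_le_ofReal
            (integral_mono hf hf.pos_part fun x => le_max_left _ _)
      _ = ∫⁻ x, ENNReal.ofReal (max (f x) 0) ∂μ :=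
          ofReal_integral_eq_lintegral_ofReal hf.pos_part
            (ae_of_all _ fun x => le_max_right _ _)
      _ = ∫⁻ x, ENNReal.ofReal (f x) ∂μ := by
          refine lintegral_congr fun x => ?_
          rcases le_total (f x) 0 with h | h
          · simp [max_eq_right h, ENNReal.ofReal_of_nonpos h]
          · simp [max_eq_left h]
  · simp [integral_undef hf]

lemma mySub (fl : ℝ → ℝ) (hflm : Measurable fl)
    (hflL2 : IntegrableOn (fun u => fl u ^ 2) (Ioi (0 : ℝ)))
    (s T : ℝ) :
    ∫⁻ t in Icc s T, ENNReal.ofReal (fl (t - s) ^ 2) ≤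
      ENNReal.ofReal (∫ u in Ioi (0:ℝ), fl u ^ 2) := by
  have hmeas : Measurable fun t : ℝ => ENNReal.ofReal (fl (t - s) ^ 2) :=
    ENNReal.measurable_ofReal.comp ((hflm.comp (measurable_id.sub_const s)).pow_const 2)
  have hmap : Measure.map (fun u : ℝ => u + s) volume = volume :=
    map_add_right_eq_self volume s
  have hpre : (fun u : ℝ => u + s) ⁻¹' Icc s T = Icc 0 (T - s) := by
    ext u; simp only [mem_preimage, mem_Icc]
    constructor <;> intro ⟨h1, h2⟩ <;> constructor <;> linarith
  have h1 : ∫⁻ t in Icc s T, ENNReal.ofReal (fl (t - s) ^ 2) =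
      ∫⁻ u in Icc 0 (T - s), ENNReal.ofReal (fl u ^ 2) := by
    conv_lhs => rw [← hmap]
    rw [setLIntegral_map measurableSet_Icc hmeas (measurable_add_const s), hpre]
    simp
  rw [h1, ← setLIntegral_congr (Ioc_ae_eq_Icc (a := (0:ℝ)) (b := T - s))]
  calc ∫⁻ u in Ioc 0 (T - s), ENNReal.ofReal (fl u ^ 2)
      ≤ ∫⁻ u in Ioi (0:ℝ), ENNReal.ofReal (fl u ^ 2) :=
        lintegral_mono_set Ioc_subset_Ioi_self
    _ = ENNReal.ofReal (∫ u in Ioi (0:ℝ), fl u ^ 2) :=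
        (ofReal_integral_eq_lintegral_ofReal hflL2
          (ae_of_all _ fun u => sq_nonneg _)).symm

lemma myDouble (fl ς phiInf : ℝ → ℝ) (M : ℝ)
    (hflm : Measurable fl)
    (hflL2 : IntegrableOn (fun u => fl u ^ 2) (Ioi (0 : ℝ)))
    (hςm : Measurable ς) (hςbd : ∀ t, ς t ^ 2 ≤ M)
    (hφm : Measurable phiInf) (hφ0 : ∀ t, 0 < t → 0 ≤ phiInf t)
    (T : ℝ) :
    ∫⁻ t in Ioc (0:ℝ) T, ∫⁻ s in Ioc (0:ℝ) t,
        ENNReal.ofReal (fl (t - s) ^ 2 * ς s ^ 2 * phiInf s) ≤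
      ENNReal.ofReal M * ENNReal.ofReal (∫ u in Ioi (0:ℝ), fl u ^ 2) *
        ∫⁻ s in Ioc (0:ℝ) T, ENNReal.ofReal (phiInf s) := by
  set A := ∫ u in Ioi (0:ℝ), fl u ^ 2 with hA
  set F : ℝ × ℝ → ℝ≥0∞ := fun p =>
    {q : ℝ × ℝ | 0 < q.2 ∧ q.2 ≤ q.1}.indicator
      (fun q => ENNReal.ofReal (fl (q.1 - q.2) ^ 2 * ς q.2 ^ 2 * phiInf q.2)) p with hF
  have hSmeas : MeasurableSet {q : ℝ × ℝ | 0 < q.2 ∧ q.2 ≤ q.1} :=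
    (measurableSet_lt measurable_const measurable_snd).inter
      (measurableSet_le measurable_snd measurable_fst)
  have hFm : Measurable F := by
    apply Measurable.indicator _ hSmeas
    exact ENNReal.measurable_ofReal.comp
      ((((hflm.comp (measurable_fst.sub measurable_snd)).pow_const 2).mul
        ((hςm.comp measurable_snd).pow_const 2)).mul (hφm.comp measurable_snd))
  have stepA : ∀ t ∈ Ioc (0:ℝ) T,
      ∫⁻ s in Ioc (0:ℝ) t, ENNReal.ofReal (fl (t - s) ^ 2 * ς s ^ 2 * phiInf s) =
        ∫⁻ s in Ioc (0:ℝ) T, F (t, s) := by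
    intro t ht
    have hfun : (fun s => F (t, s)) = (Ioc (0:ℝ) t).indicator
        (fun s => ENNReal.ofReal (fl (t - s) ^ 2 * ς s ^ 2 * phiInf s)) := by
      funext s
      by_cases hs : s ∈ Ioc (0:ℝ) t
      · simp only [hF, indicator, mem_Ioc] at *
        rw [if_pos hs, if_pos]; exact ⟨hs.1, hs.2⟩
      · simp only [hF, indicator, mem_Ioc] at *
        rw [if_neg hs, if_neg]; exact hs
    rw [hfun, lintegral_indicator measurableSet_Ioc, Measure.restrict_restrict measurableSet_Ioc,
      inter_eq_left.mpr (Ioc_subset_Ioc_right ht.2)]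
  rw [setLIntegral_congr_fun measurableSet_Ioc stepA]
  have prodrw : (volume.restrict (Ioc (0:ℝ) T)).prod (volume.restrict (Ioc (0:ℝ) T)) =
      (volume.prod volume).restrict ((Ioc (0:ℝ) T) ×ˢ (Ioc (0:ℝ) T)) :=
    Measure.prod_restrict _ _
  have stepB : ∫⁻ t in Ioc (0:ℝ) T, ∫⁻ s in Ioc (0:ℝ) T, F (t, s) =
      ∫⁻ s in Ioc (0:ℝ) T, ∫⁻ t in Ioc (0:ℝ) T, F (t, s) := by
    apply lintegral_lintegral_swap
    rw [prodrw]
    exact hFm.aemeasurable.restrict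
  rw [stepB]
  have stepC : ∀ s ∈ Ioc (0:ℝ) T,
      ∫⁻ t in Ioc (0:ℝ) T, F (t, s) ≤
        ENNReal.ofReal M * ENNReal.ofReal A * ENNReal.ofReal (phiInf s) := by
    intro s hs
    have hφs : 0 ≤ phiInf s := hφ0 s hs.1
    have hfun : (fun t => F (t, s)) = (Ici s).indicator
        (fun t => ENNReal.ofReal (fl (t - s) ^ 2) * ENNReal.ofReal (ς s ^ 2 * phiInf s)) := by
      funext t
      by_cases hts : s ≤ t
      · simp only [hF, indicator, mem_Ici, mem_setOf_eq]
        rw [if_pos hts, if_pos ⟨hs.1, hts⟩, mul_assoc,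
          ENNReal.ofReal_mul (sq_nonneg _)]
      · simp only [hF, indicator, mem_Ici, mem_setOf_eq]
        rw [if_neg hts, if_neg (fun h => hts h.2)]
    rw [hfun, lintegral_indicator measurableSet_Ici, Measure.restrict_restrict measurableSet_Ici]
    have hsub : Ici s ∩ Ioc (0:ℝ) T ⊆ Icc s T := fun x hx => ⟨hx.1, hx.2.2⟩
    calc ∫⁻ t in Ici s ∩ Ioc (0:ℝ) T,
          ENNReal.ofReal (fl (t - s) ^ 2) * ENNReal.ofReal (ς s ^ 2 * phiInf s)
        ≤ ∫⁻ t in Icc s T,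
          ENNReal.ofReal (fl (t - s) ^ 2) * ENNReal.ofReal (ς s ^ 2 * phiInf s) :=
          lintegral_mono_set hsub
      _ = (∫⁻ t in Icc s T, ENNReal.ofReal (fl (t - s) ^ 2)) *
            ENNReal.ofReal (ς s ^ 2 * phiInf s) :=
          lintegral_mul_const' _ _ ENNReal.ofReal_ne_top
      _ ≤ ENNReal.ofReal A * ENNReal.ofReal (M * phiInf s) := by
          apply mul_le_mul' (mySub fl hflm hflL2 s T)
          exact ENNReal.ofReal_le_ofReal (mul_le_mul_of_nonneg_right (hςbd s) hφs)
      _ = ENNReal.ofReal M * ENNReal.ofReal A * ENNReal.ofReal (phiInf s) := by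
          rw [ENNReal.ofReal_mul (le_trans (sq_nonneg (ς s)) (hςbd s))]; ring
  calc ∫⁻ s in Ioc (0:ℝ) T, ∫⁻ t in Ioc (0:ℝ) T, F (t, s)
      ≤ ∫⁻ s in Ioc (0:ℝ) T,
          ENNReal.ofReal M * ENNReal.ofReal A * ENNReal.ofReal (phiInf s) :=
        setLIntegral_mono_ae (by fun_prop) (ae_of_all _ stepC)
    _ = ENNReal.ofReal M * ENNReal.ofReal A *
          ∫⁻ s in Ioc (0:ℝ) T, ENNReal.ofReal (phiInf s) :=
        lintegral_const_mul' _ _ (ENNReal.mul_ne_top ENNReal.ofReal_ne_top ENNReal.ofReal_ne_top)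

theorem contraction_function_integrable
    (lam c κ M : ℝ) (hlam : 0 < lam) (hκ : 0 < κ)
    (hc : c ∈ Ioo (0 : ℝ) (1 / κ))
    (fl ς Ξ phiInf : ℝ → ℝ)
    (hflm : Measurable fl) (hfl0 : ∀ t, 0 < t → 0 ≤ fl t)
    (hflL2 : IntegrableOn (fun u => fl u ^ 2) (Ioi (0 : ℝ)))
    (hflpos : 0 < ∫ u in Ioi (0 : ℝ), fl u ^ 2)
    (hςm : Measurable ς) (hς0 : ∀ t, 0 ≤ ς t ^ 2) (hςbd : ∀ t, ς t ^ 2 ≤ M)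
    (hΞL2 : IntegrableOn (fun t => Ξ t ^ 2) (Ioi (0 : ℝ)))
    (hφcont : Continuous phiInf) (hφrange : ∀ t, 0 ≤ t → phiInf t ∈ Icc (0 : ℝ) 1)
    (hstab : ∀ t : ℝ, 0 ≤ t →
      (∫ s in Ioc (0 : ℝ) t, fl (t - s) ^ 2 * ς s ^ 2) =
        c * lam ^ 2 * (1 - Ξ t ^ 2))
    (hfunc : ∀ t : ℝ, 0 ≤ t →
      phiInf t = Ξ t ^ 2 + (c * κ) / (lam ^ 2 * c) *
        ∫ s in Ioc (0 : ℝ) t, fl (t - s) ^ 2 * ς s ^ 2 * phiInf s)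
    (hsmall : κ * M * (∫ u in Ioi (0 : ℝ), fl u ^ 2) < lam ^ 2) :
    IntegrableOn phiInf (Ioi (0 : ℝ)) ∧
      (∫ s in Ioi (0 : ℝ), phiInf s) ≤
        lam ^ 2 / (lam ^ 2 - κ * M * ∫ u in Ioi (0 : ℝ), fl u ^ 2) *
          ∫ t in Ioi (0 : ℝ), Ξ t ^ 2 := by
  set A := ∫ u in Ioi (0:ℝ), fl u ^ 2 with hA
  set X := ∫ t in Ioi (0:ℝ), Ξ t ^ 2 with hX
  have hM0 : 0 ≤ M := le_trans (hς0 0) (hςbd 0)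
  have hA0 : 0 ≤ A := le_of_lt hflpos
  have hlam2 : (0:ℝ) < lam ^ 2 := by positivity
  have hD : 0 < lam ^ 2 - κ * M * A := by linarith
  have hX0 : 0 ≤ X := setIntegral_nonneg measurableSet_Ioi fun t _ => sq_nonneg _
  have hc0 : c ≠ 0 := ne_of_gt hc.1
  have hcoef : (c * κ) / (lam ^ 2 * c) = κ / lam ^ 2 := by
    field_simp
  have hK0 : 0 ≤ κ / lam ^ 2 := by positivity
  have hφm : Measurable phiInf := hφcont.measurable
  have hφ0 : ∀ t, 0 < t → 0 ≤ phiInf t := fun t ht => (hφrange t ht.le).1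
  set Cb := lam ^ 2 / (lam ^ 2 - κ * M * A) * X with hCb
  have hCb0 : 0 ≤ Cb := by positivity
  have hΞae : AEMeasurable (fun t => ENNReal.ofReal (Ξ t ^ 2))
      (volume.restrict (Ioi (0:ℝ))) :=
    ENNReal.measurable_ofReal.comp_aemeasurable hΞL2.aemeasurable
  have hXrw : ∫⁻ t in Ioi (0:ℝ), ENNReal.ofReal (Ξ t ^ 2) = ENNReal.ofReal X :=
    (ofReal_integral_eq_lintegral_ofReal hΞL2 (ae_of_all _ fun t => sq_nonneg _)).symm
  -- key bound for each horizon T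
  have key : ∀ T : ℝ, (∫⁻ t in Ioc (0:ℝ) T, ENNReal.ofReal (phiInf t)) ≤
      ENNReal.ofReal Cb := by
    intro T
    set L := ∫⁻ t in Ioc (0:ℝ) T, ENNReal.ofReal (phiInf t) with hL
    have hLtop : L ≠ ⊤ := by
      have h1 : L ≤ ∫⁻ _ in Ioc (0:ℝ) T, (1:ℝ≥0∞) := by
        refine setLIntegral_mono measurable_const fun t ht => ?_
        exact ENNReal.ofReal_le_one.mpr (hφrange t ht.1.le).2
      have h2 : ∫⁻ _ in Ioc (0:ℝ) T, (1:ℝ≥0∞) = volume (Ioc (0:ℝ) T) := by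
        simp
      refine ne_top_of_le_ne_top ?_ (h1.trans_eq h2)
      simp [Real.volume_Ioc]
    have hΞae' : AEMeasurable (fun t => ENNReal.ofReal (Ξ t ^ 2))
        (volume.restrict (Ioc (0:ℝ) T)) :=
      hΞae.mono_measure (Measure.restrict_mono Ioc_subset_Ioi_self le_rfl)
    have hmain : L ≤ ENNReal.ofReal X + ENNReal.ofReal (κ / lam ^ 2) *
        (ENNReal.ofReal M * ENNReal.ofReal A * L) := by
      calc L = ∫⁻ t in Ioc (0:ℝ) T, ENNReal.ofReal (Ξ t ^ 2 + κ / lam ^ 2 *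
            ∫ s in Ioc (0:ℝ) t, fl (t - s) ^ 2 * ς s ^ 2 * phiInf s) := by
            refine setLIntegral_congr_fun measurableSet_Ioc (fun t ht => ?_)
            rw [hfunc t ht.1.le, hcoef]
        _ ≤ ∫⁻ t in Ioc (0:ℝ) T, (ENNReal.ofReal (Ξ t ^ 2) + ENNReal.ofReal (κ / lam ^ 2) *
            ∫⁻ s in Ioc (0:ℝ) t,
              ENNReal.ofReal (fl (t - s) ^ 2 * ς s ^ 2 * phiInf s)) := by
            refine lintegral_mono_ae (ae_of_all _ fun t => ?_)
            refine le_trans (ENNReal.ofReal_add_le) (add_le_add le_rfl ?_)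
            rw [ENNReal.ofReal_mul hK0]
            exact mul_le_mul_right (myOfReal_integral_le _ _) _
        _ = (∫⁻ t in Ioc (0:ℝ) T, ENNReal.ofReal (Ξ t ^ 2)) + ENNReal.ofReal (κ / lam ^ 2) *
            ∫⁻ t in Ioc (0:ℝ) T, ∫⁻ s in Ioc (0:ℝ) t,
              ENNReal.ofReal (fl (t - s) ^ 2 * ς s ^ 2 * phiInf s) := by
            rw [lintegral_add_left' hΞae', lintegral_const_mul' _ _ ENNReal.ofReal_ne_top]
        _ ≤ ENNReal.ofReal X + ENNReal.ofReal (κ / lam ^ 2) *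
            (ENNReal.ofReal M * ENNReal.ofReal A * L) := by
            refine add_le_add ?_ (mul_le_mul_right
              (myDouble fl ς phiInf M hflm hflL2 hςm hςbd hφm hφ0 T) _)
            exact le_trans (lintegral_mono_set Ioc_subset_Ioi_self) hXrw.le
    -- pass to reals
    have hx := ENNReal.toReal_mono (by
      refine ENNReal.add_ne_top.mpr ⟨ENNReal.ofReal_ne_top, ?_⟩
      exact ENNReal.mul_ne_top ENNReal.ofReal_ne_top
        (ENNReal.mul_ne_top (ENNReal.mul_ne_top ENNReal.ofReal_ne_top ENNReal.ofReal_ne_top)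
          hLtop)) hmain
    rw [ENNReal.toReal_add ENNReal.ofReal_ne_top
        (ENNReal.mul_ne_top ENNReal.ofReal_ne_top
          (ENNReal.mul_ne_top (ENNReal.mul_ne_top ENNReal.ofReal_ne_top ENNReal.ofReal_ne_top)
            hLtop)),
      ENNReal.toReal_mul, ENNReal.toReal_mul, ENNReal.toReal_mul,
      ENNReal.toReal_ofReal hX0, ENNReal.toReal_ofReal hK0,
      ENNReal.toReal_ofReal hM0, ENNReal.toReal_ofReal hA0] at hx
    set x := L.toReal with hxdef
    have hx0 : 0 ≤ x := ENNReal.toReal_nonneg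
    have hxCb : x ≤ Cb := by
      rw [hCb, div_mul_eq_mul_div, le_div_iff₀ hD]
      have h1 : x * lam ^ 2 ≤ X * lam ^ 2 + κ * (M * A * x) := by
        calc x * lam ^ 2 ≤ (X + κ / lam ^ 2 * (M * A * x)) * lam ^ 2 :=
              mul_le_mul_of_nonneg_right hx (le_of_lt hlam2)
          _ = X * lam ^ 2 + κ * (M * A * x) := by field_simp
      nlinarith [h1]
    calc L = ENNReal.ofReal x := (ENNReal.ofReal_toReal hLtop).symm
      _ ≤ ENNReal.ofReal Cb := ENNReal.ofReal_le_ofReal hxCb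
  -- pass to the full half-line by monotone convergence
  have hIoi : (∫⁻ t in Ioi (0:ℝ), ENNReal.ofReal (phiInf t)) ≤ ENNReal.ofReal Cb := by
    set g : ℕ → ℝ → ℝ≥0∞ := fun n t =>
      (Ioc (0:ℝ) (n:ℝ)).indicator (fun t => ENNReal.ofReal (phiInf t)) t with hg
    have hgm : ∀ n, Measurable (g n) := fun n =>
      (ENNReal.measurable_ofReal.comp hφm).indicator measurableSet_Ioc
    have hgmono : Monotone g := fun m n h =>
      indicator_le_indicator_of_subset
        (Ioc_subset_Ioc_right (by exact_mod_cast h)) (fun _ => zero_le)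
    have hsup : ∀ t, (⨆ n, g n t) =
        (Ioi (0:ℝ)).indicator (fun t => ENNReal.ofReal (phiInf t)) t := by
      intro t
      apply le_antisymm
      · exact iSup_le fun n =>
          indicator_le_indicator_of_subset Ioc_subset_Ioi_self (fun _ => zero_le) t
      · by_cases ht : 0 < t
        · have hn : t ≤ (⌈t⌉₊ : ℝ) := Nat.le_ceil t
          have heq : (Ioi (0:ℝ)).indicator (fun t => ENNReal.ofReal (phiInf t)) t =
              g ⌈t⌉₊ t := by
            rw [indicator_of_mem (mem_Ioi.mpr ht)]
            exact (indicator_of_mem (mem_Ioc.mpr ⟨ht, hn⟩) (fun t => ENNReal.ofReal (phiInf t))).symm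
          rw [heq]
          exact le_iSup (fun n => g n t) ⌈t⌉₊
        · have : t ∉ Ioi (0:ℝ) := ht
          simp [indicator_of_notMem this]
    calc ∫⁻ t in Ioi (0:ℝ), ENNReal.ofReal (phiInf t)
        = ∫⁻ t, (Ioi (0:ℝ)).indicator (fun t => ENNReal.ofReal (phiInf t)) t :=
          (lintegral_indicator measurableSet_Ioi _).symm
      _ = ∫⁻ t, ⨆ n, g n t := lintegral_congr fun t => (hsup t).symm
      _ = ⨆ n, ∫⁻ t, g n t := lintegral_iSup hgm hgmono
      _ ≤ ENNReal.ofReal Cb := by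
          refine iSup_le fun n => ?_
          rw [hg]
          rw [lintegral_indicator measurableSet_Ioc]
          exact key n
  -- integrability
  have haenn : 0 ≤ᵐ[volume.restrict (Ioi (0:ℝ))] phiInf :=
    (ae_restrict_iff' measurableSet_Ioi).2 (ae_of_all _ fun t ht => hφ0 t ht)
  have hint : IntegrableOn phiInf (Ioi (0:ℝ)) := by
    refine ⟨hφcont.aestronglyMeasurable.restrict, ?_⟩
    rw [hasFiniteIntegral_iff_ofReal haenn]
    exact lt_of_le_of_lt hIoi ENNReal.ofReal_lt_top
  refine ⟨hint, ?_⟩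
  rw [integral_eq_lintegral_of_nonneg_ae haenn hφcont.aestronglyMeasurable.restrict]
  exact ENNReal.toReal_le_of_le_ofReal hCb0 hIoi
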